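/- Let j ≥ 0 and k ≥ 1. For all n ≥ 1, the preimage (F_k^j)^{-1}({n}) equals the integer interval (L_k^j(n-1), L_k^j(n)] ∩ ℕ. Equivalently, for all m ≥ 1 one has L_k^j(F_k^j(m) - 1) < m ≤ L_k^j(F_k^j(m)). -/
import Mathlib


/-- The substitution τ_k, applied to a single letter: τ_k(k) = k1 and τ_k(i) = i+1 for i ≠ k. -/
def tauLetter (k i : ℕ) : List ℕ := if i = k then [k, 1] else [i + 1]

/-- The substitution τ_k, extended to finite words (lists of letters) by concatenation. -/
def tauWord (k : ℕ) (w : List ℕ) : List ℕ := w.flatMap (tauLetter k)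

/-- The infinite fixed point x_k of τ_k (starting with the letter k): its n-th letter is the
n-th letter of any sufficiently long iterate τ_k^j(k), here j = n+1. -/
def xk (k n : ℕ) : ℕ := ((tauWord k)^[n + 1] [k]).getD n 0

/-- L_k(n) = |τ_k(x_k[0:n))|, the length of the τ_k-image of the prefix of x_k of length n. -/
def Lk (k n : ℕ) : ℕ := (tauWord k ((List.range n).map (xk k))).length

/-- C_k^{(=i)}(n): the number of occurrences of the letter i among x_k[0],...,x_k[n-1]. -/
def Ceq (k i n : ℕ) : ℕ := ((Finset.range n).filter (fun m => xk k m = i)).card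

/-- C_k^{(>j)}(n): the number of positions m < n with x_k[m] > j. -/
def Cgt (k j n : ℕ) : ℕ := ((Finset.range n).filter (fun m => j < xk k m)).card

namespace Hof
variable (k : ℕ)

def W (j : ℕ) : List ℕ := (tauWord k)^[j] [k]
def P (n : ℕ) : List ℕ := (List.range n).map (xk k)

lemma tauWord_append (w v : List ℕ) : tauWord k (w ++ v) = tauWord k w ++ tauWord k v := by
  simp [tauWord]

lemma tauWord_cons (a : ℕ) (w : List ℕ) :
    tauWord k (a :: w) = tauLetter k a ++ tauWord k w := by
  simp [tauWord]

lemma tauLetter_length_pos (i : ℕ) : 0 < (tauLetter k i).length := by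
  unfold tauLetter; split <;> simp

lemma length_le_tauWord (w : List ℕ) : w.length ≤ (tauWord k w).length := by
  induction w with
  | nil => simp [tauWord]
  | cons a t ih =>
      rw [tauWord_cons]
      simp only [List.length_cons, List.length_append]
      have := tauLetter_length_pos k a
      omega

lemma W_head : ∀ j, ∃ t, W k j = k :: t := by
  intro j
  induction j with
  | zero => exact ⟨[], rfl⟩
  | succ j ih =>
      obtain ⟨t, ht⟩ := ih
      refine ⟨1 :: tauWord k t, ?_⟩
      have : W k (j+1) = tauWord k (W k j) := by
        simp [W, Function.iterate_succ_apply']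
      rw [this, ht, tauWord_cons]
      simp [tauLetter]

lemma W_length (j : ℕ) : j + 1 ≤ (W k j).length := by
  induction j with
  | zero => simp [W]
  | succ j ih =>
      obtain ⟨t, ht⟩ := W_head k j
      have h1 : W k (j+1) = tauWord k (W k j) := by
        simp [W, Function.iterate_succ_apply']
      rw [h1, ht, tauWord_cons]
      have := length_le_tauWord k t
      have : (tauLetter k k).length = 2 := by simp [tauLetter]
      simp only [List.length_append, this]
      have h2 := length_le_tauWord k t
      rw [ht] at ih
      simp at ih
      omega

lemma tauWord_prefix {w v : List ℕ} (h : w <+: v) : tauWord k w <+: tauWord k v := by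
  obtain ⟨u, rfl⟩ := h
  exact ⟨tauWord k u, (tauWord_append k w u).symm⟩

lemma W_prefix_succ (j : ℕ) : W k j <+: W k (j+1) := by
  induction j with
  | zero => exact ⟨[1], by simp [W, tauWord, tauLetter]⟩
  | succ j ih =>
      have h1 : W k (j+1) = tauWord k (W k j) := by
        simp [W, Function.iterate_succ_apply']
      have h2 : W k (j+2) = tauWord k (W k (j+1)) := by
        simp [W, Function.iterate_succ_apply']
      rw [h1, h2]
      exact tauWord_prefix k ih

lemma W_prefix {i j : ℕ} (h : i ≤ j) : W k i <+: W k j := by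
  induction j with
  | zero => simp_all
  | succ j ih =>
      rcases Nat.lt_or_ge i (j+1) with h' | h'
      · exact (ih (by omega)).trans (W_prefix_succ k j)
      · have : i = j + 1 := by omega
        subst this; exact List.prefix_refl _

lemma xk_eq_W {n j : ℕ} (h : n < j) : xk k n = (W k j).getD n 0 := by
  obtain ⟨t, ht⟩ := W_prefix k (show n + 1 ≤ j by omega)
  have hl : n < (W k (n+1)).length := by have := W_length k (n+1); omega
  rw [xk]
  show (W k (n+1)).getD n 0 = _
  rw [← ht, List.getD_append _ _ _ _ hl]

lemma P_eq_take {n j : ℕ} (h : n ≤ j) : P k n = (W k j).take n := by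
  have hlen : n ≤ (W k j).length := by have := W_length k j; omega
  apply List.ext_getElem
  · simp [P]; omega
  · intro i h1 h2
    simp only [P, List.length_map, List.length_range] at h1
    simp only [P, List.getElem_map, List.getElem_range, List.getElem_take]
    rw [xk_eq_W k (show i < j by omega)]
    rw [List.getD_eq_getElem _ _ (by omega)]

lemma P_succ (n : ℕ) : P k (n+1) = P k n ++ [xk k n] := by
  simp [P, List.range_succ]

lemma P_length (n : ℕ) : (P k n).length = n := by simp [P]

lemma Lk_def (n : ℕ) : Lk k n = (tauWord k (P k n)).length := rfl

lemma tau_P (n : ℕ) : tauWord k (P k n) = P k (Lk k n) := by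
  have h1 : P k n = (W k n).take n := P_eq_take k le_rfl
  have hpre : tauWord k (P k n) <+: W k (n+1) := by
    have : W k (n+1) = tauWord k (W k n) := by
      simp [W, Function.iterate_succ_apply']
    rw [this]
    exact tauWord_prefix k (h1 ▸ List.take_prefix n (W k n))
  have hpre2 : tauWord k (P k n) <+: W k (Lk k n + n + 1) :=
    hpre.trans (W_prefix k (by omega))
  have hlen : (tauWord k (P k n)).length = Lk k n := rfl
  rw [P_eq_take k (show Lk k n ≤ Lk k n + n + 1 by omega)]
  rw [← hlen]
  exact List.prefix_iff_eq_take.mp hpre2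

lemma block (n : ℕ) : P k (Lk k (n+1)) = P k (Lk k n) ++ tauLetter k (xk k n) := by
  rw [← tau_P, ← tau_P, P_succ, tauWord_append]
  simp [tauWord]

lemma Lk_zero : Lk k 0 = 0 := rfl

lemma Lk_succ (n : ℕ) :
    Lk k (n+1) = Lk k n + (if xk k n = k then 2 else 1) := by
  have h := congrArg List.length (block k n)
  simp only [List.length_append, P_length] at h
  rw [h]
  unfold tauLetter
  split <;> simp

lemma xk_zero : xk k 0 = k := by
  show ((tauWord k)^[1] [k]).getD 0 0 = k
  simp [tauWord, tauLetter]

lemma xk_eq_P {m t : ℕ} (h : m < t) : xk k m = (P k t).getD m 0 := by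
  rw [List.getD_eq_getElem _ _ (by rw [P_length]; omega)]
  simp [P]

lemma Lk_one : Lk k 1 = 2 := by
  rw [show (1:ℕ) = 0 + 1 from rfl, Lk_succ, xk_zero]
  simp [Lk_zero]

lemma Lk_lt_succ (n : ℕ) : Lk k n < Lk k (n+1) := by
  rw [Lk_succ]; split <;> omega

lemma Lk_mono : StrictMono (Lk k) := strictMono_nat_of_lt_succ (Lk_lt_succ k)

lemma le_Lk (n : ℕ) : n ≤ Lk k n := by
  induction n with
  | zero => simp [Lk_zero]
  | succ n ih => have := Lk_lt_succ k n; omega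

lemma succ_le_Lk {n : ℕ} (h : 1 ≤ n) : n + 1 ≤ Lk k n := by
  induction n with
  | zero => omega
  | succ n ih =>
      rcases Nat.eq_or_lt_of_le h with h' | h'
      · rw [← h', Lk_one]
      · have := ih (by omega); have := Lk_lt_succ k n; omega

lemma Lk_succ_le (n : ℕ) : Lk k (n+1) ≤ Lk k n + 2 := by
  rw [Lk_succ]; split <;> omega

/-- letters within a block -/
lemma block_letter (n : ℕ) {m : ℕ} (h1 : Lk k n ≤ m) (h2 : m < Lk k (n+1)) :
    xk k m = (tauLetter k (xk k n)).getD (m - Lk k n) 0 := by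
  rw [xk_eq_P k h2, block]
  rw [List.getD_append_right _ _ _ _ (by rw [P_length]; omega), P_length]

lemma block_letter_first {n : ℕ} :
    xk k (Lk k n) = if xk k n = k then k else xk k n + 1 := by
  rw [block_letter k n le_rfl (Lk_lt_succ k n)]
  simp only [Nat.sub_self]
  unfold tauLetter; split <;> simp

lemma block_letter_second {n : ℕ} (h : xk k n = k) : xk k (Lk k n + 1) = 1 := by
  rw [block_letter k n (by omega) (by rw [Lk_succ, h]; simp)]
  simp [h, tauLetter]

def G (m : ℕ) : ℕ := Nat.find (⟨m, le_Lk k m⟩ : ∃ n, m ≤ Lk k n)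

lemma le_Lk_G (m : ℕ) : m ≤ Lk k (G k m) := by
  exact Nat.find_spec (⟨m, le_Lk k m⟩ : ∃ n, m ≤ Lk k n)

lemma Lk_lt_of_lt_G {s m : ℕ} (h : s < G k m) : Lk k s < m := by
  have := Nat.find_min (⟨m, le_Lk k m⟩ : ∃ n, m ≤ Lk k n) h
  omega

lemma Lk_lt_iff {s m : ℕ} : Lk k s < m ↔ s < G k m := by
  constructor
  · intro h
    by_contra h'
    have := (Lk_mono k).monotone (show G k m ≤ s by omega)
    have := le_Lk_G k m
    omega
  · exact Lk_lt_of_lt_G k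

lemma G_le_iff {m b : ℕ} : G k m ≤ b ↔ m ≤ Lk k b := by
  constructor
  · intro h; exact (le_Lk_G k m).trans ((Lk_mono k).monotone h)
  · intro h; exact Nat.find_min' _ h

lemma G_Lk (n : ℕ) : G k (Lk k n) = n := by
  have h1 : G k (Lk k n) ≤ n := (G_le_iff k).mpr le_rfl
  have h2 : ¬ (G k (Lk k n) < n) := by
    intro h
    have h3 := (Lk_mono k) h
    have := le_Lk_G k (Lk k n)
    omega
  omega

lemma G_le (m : ℕ) : G k m ≤ m := (G_le_iff k).mpr (le_Lk k m)

lemma G_zero : G k 0 = 0 := by have := G_le k 0; omega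

lemma one_le_G {m : ℕ} (h : 1 ≤ m) : 1 ≤ G k m := by
  have : Lk k 0 < m := by rw [Lk_zero]; omega
  exact (Lk_lt_iff k).mp this

/-- the "sandwich": for m ≥ 1, Lk (G m - 1) < m ≤ Lk (G m) -/
lemma G_sandwich {m : ℕ} (h : 1 ≤ m) : Lk k (G k m - 1) < m ∧ m ≤ Lk k (G k m) := by
  have h1 := one_le_G k h
  exact ⟨Lk_lt_of_lt_G k (by omega), le_Lk_G k m⟩

lemma xk_bounds (hk : 1 ≤ k) : ∀ m, 1 ≤ xk k m ∧ xk k m ≤ k := by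
  intro m
  induction m using Nat.strong_induction_on with
  | _ m ih =>
    rcases Nat.eq_zero_or_pos m with rfl | hm
    · rw [xk_zero]; omega
    · -- find n with Lk n ≤ m < Lk (n+1)
      set n := G k (m+1) - 1 with hn
      have hG1 : 1 ≤ G k (m+1) := one_le_G k (by omega)
      have hns : n + 1 = G k (m+1) := by omega
      have hLn : Lk k n ≤ m := by
        have := Lk_lt_of_lt_G k (show n < G k (m+1) by omega); omega
      have hLns : m < Lk k (n+1) := by
        rw [hns]; have := le_Lk_G k (m+1); omega
      have hb := block_letter k n hLn hLns
      by_cases hcase : xk k n = k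
      · rw [hcase] at hb
        have h2 : Lk k (n+1) = Lk k n + 2 := by rw [Lk_succ, hcase]; simp
        have hor : m = Lk k n ∨ m = Lk k n + 1 := by omega
        rcases hor with hor | hor
        all_goals rw [hor] at hb ⊢
        · simp only [Nat.sub_self] at hb
          simp [tauLetter] at hb
          omega
        · simp only [Nat.add_sub_cancel_left] at hb
          simp [tauLetter] at hb
          omega
      · rw [hb]
        have hm2 : m = Lk k n := by
          have h2 : Lk k (n+1) = Lk k n + 1 := by rw [Lk_succ, if_neg hcase]
          omega
        have hn1 : 1 ≤ n := by
          by_contra h'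
          have : n = 0 := by omega
          rw [this, xk_zero] at hcase; exact hcase rfl
        have hnm : n < m := by have := succ_le_Lk k hn1; omega
        have := ih n hnm
        simp only [tauLetter, if_neg hcase, hm2, Nat.sub_self]
        simp
        omega

lemma Cgt_succ (i n : ℕ) : Cgt k i (n+1) = Cgt k i n + (if i < xk k n then 1 else 0) := by
  unfold Cgt
  rw [Finset.range_add_one, Finset.filter_insert]
  split
  · rw [Finset.card_insert_of_notMem (by simp)]
  · simp

lemma Ceq_succ (i n : ℕ) : Ceq k i (n+1) = Ceq k i n + (if xk k n = i then 1 else 0) := by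
  unfold Ceq
  rw [Finset.range_add_one, Finset.filter_insert]
  split
  · rw [Finset.card_insert_of_notMem (by simp)]
  · simp

lemma Cgt_zero (i : ℕ) : Cgt k i 0 = 0 := by simp [Cgt]

/-- K2 -/
lemma Cgt_Lk (i t : ℕ) (hik : i + 1 < k) : Cgt k (i+1) (Lk k t) = Cgt k i t := by
  induction t with
  | zero => rw [Lk_zero]; simp [Cgt]
  | succ t ih =>
      rw [Lk_succ, Cgt_succ k i t, ← ih]
      by_cases hc : xk k t = k
      · rw [if_pos hc]
        have e1 : xk k (Lk k t) = k := by rw [block_letter_first, if_pos hc]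
        have e2 : xk k (Lk k t + 1) = 1 := block_letter_second k hc
        have : Lk k t + 2 = (Lk k t + 1) + 1 := rfl
        rw [this, Cgt_succ, Cgt_succ, e1, e2]
        rw [if_pos (show i + 1 < k by omega), if_neg (by omega)]
        rw [if_pos (show i < xk k t by omega)]
      · rw [if_neg hc, Cgt_succ]
        have e1 : xk k (Lk k t) = xk k t + 1 := by rw [block_letter_first, if_neg hc]
        rw [e1]
        congr 1
        by_cases h2 : i < xk k t
        · rw [if_pos (by omega), if_pos h2]
        · rw [if_neg (by omega), if_neg h2]

/-- K3 -/
lemma Cgt_gap (i t : ℕ) (hi : 1 ≤ i) : Cgt k i t = Cgt k i (Lk k (G k t)) := by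
  rcases Nat.eq_zero_or_pos t with rfl | ht
  · rw [G_zero, Lk_zero]
  · have h1 : 1 ≤ G k t := one_le_G k ht
    have h2 : t ≤ Lk k (G k t) := le_Lk_G k t
    rcases Nat.eq_or_lt_of_le h2 with h3 | h3
    · rw [← h3]
    · -- t < Lk (G t); then t = Lk (G t - 1) + 1 and x t = 1
      set s := G k t - 1 with hs
      have hss : s + 1 = G k t := by omega
      have h4 : Lk k s < t := (Lk_lt_iff k).mpr (by omega)
      have h5 : Lk k (s+1) ≤ Lk k s + 2 := Lk_succ_le k s
      rw [hss] at h5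
      have h6 : t = Lk k s + 1 := by omega
      have h7 : Lk k (s+1) = Lk k s + 2 := by rw [hss]; omega
      have h8 : xk k s = k := by
        by_contra h'
        rw [Lk_succ, if_neg h'] at h7; omega
      have h9 : xk k t = 1 := by rw [h6]; exact block_letter_second k h8
      have h10 : Lk k (G k t) = t + 1 := by rw [← hss, h7]; omega
      rw [h10, Cgt_succ, h9, if_neg (by omega)]
      simp

/-- K1: m = G m + (number of skipped values below m) -/
lemma key_count {m : ℕ} (hm : 1 ≤ m) : m = G k m + Ceq k k (G k (m-1)) := by
  classical
  have hsplit := Finset.card_filter_add_card_filter_not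
    (s := Finset.range m) (p := fun v => ∃ t, Lk k t = v)
  have hA : ((Finset.range m).filter (fun v => ∃ t, Lk k t = v))
      = (Finset.range (G k m)).image (Lk k) := by
    ext v
    simp only [Finset.mem_filter, Finset.mem_range, Finset.mem_image]
    constructor
    · rintro ⟨hv, t, rfl⟩
      exact ⟨t, (Lk_lt_iff k).mp hv, rfl⟩
    · rintro ⟨t, ht, rfl⟩
      exact ⟨(Lk_lt_iff k).mpr ht, t, rfl⟩
  have hB : ((Finset.range m).filter (fun v => ¬∃ t, Lk k t = v))
      = ((Finset.range (G k (m-1))).filter (fun t => xk k t = k)).image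
          (fun t => Lk k t + 1) := by
    ext v
    simp only [Finset.mem_filter, Finset.mem_range, Finset.mem_image]
    constructor
    · rintro ⟨hv, hno⟩
      have hv1 : 1 ≤ v := by
        rcases Nat.eq_zero_or_pos v with rfl | h
        · exact absurd ⟨0, Lk_zero k⟩ hno
        · exact h
      have h1 : 1 ≤ G k v := one_le_G k hv1
      set s := G k v - 1 with hs
      have hss : s + 1 = G k v := by omega
      have h4 : Lk k s < v := (Lk_lt_iff k).mpr (by omega)
      have h2 : v ≤ Lk k (G k v) := le_Lk_G k v
      have h3 : v < Lk k (G k v) := by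
        rcases Nat.eq_or_lt_of_le h2 with h3 | h3
        · exact absurd ⟨G k v, h3.symm⟩ hno
        · exact h3
      rw [← hss] at h3
      have h5 : Lk k (s+1) ≤ Lk k s + 2 := Lk_succ_le k s
      have h6 : v = Lk k s + 1 := by omega
      have h7 : xk k s = k := by
        by_contra h'
        have := Lk_succ k s
        rw [if_neg h'] at this
        omega
      refine ⟨s, ⟨?_, h7⟩, h6.symm⟩
      have : m ≥ 2 := by omega
      exact (Lk_lt_iff k).mp (by omega)
    · rintro ⟨t, ⟨ht, hxt⟩, rfl⟩
      have h1 : Lk k t < m - 1 := by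
        have := (Lk_lt_iff (k := k) (s := t) (m := m-1)).mpr ht
        omega
      refine ⟨by omega, ?_⟩
      rintro ⟨s, hls⟩
      have hstep : Lk k (t+1) = Lk k t + 2 := by rw [Lk_succ, if_pos hxt]
      rcases Nat.lt_or_ge t s with h' | h'
      · have := (Lk_mono k).monotone (show t + 1 ≤ s by omega)
        omega
      · have := (Lk_mono k).monotone h'
        omega
  rw [hA, hB] at hsplit
  rw [Finset.card_image_of_injective _ (Lk_mono k).injective] at hsplit
  rw [Finset.card_image_of_injective _
    (fun a b hab => (Lk_mono k).injective (by omega))] at hsplit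
  simp only [Finset.card_range] at hsplit
  unfold Ceq
  omega

/-- K4 -/
lemma G_iterate (hk : 1 ≤ k) : ∀ i t, i < k → (G k)^[i] t = Cgt k i t := by
  intro i
  induction i with
  | zero =>
      intro t _
      simp only [Function.iterate_zero, id_eq]
      unfold Cgt
      rw [Finset.filter_true_of_mem, Finset.card_range]
      intro m _
      exact (xk_bounds k hk m).1
  | succ i ih =>
      intro t hik
      rw [Function.iterate_succ_apply]
      rw [ih (G k t) (by omega)]
      rw [← Cgt_Lk k i (G k t) hik]
      exact (Cgt_gap k (i+1) t (by omega)).symm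

lemma Cgt_eq_Ceq (hk : 1 ≤ k) (t : ℕ) : Cgt k (k-1) t = Ceq k k t := by
  unfold Cgt Ceq
  congr 1
  apply Finset.filter_congr
  intro m _
  have := xk_bounds k hk m
  constructor <;> intro h <;> simp_all <;> omega

/-- the recurrence for G -/
lemma G_rec (hk : 1 ≤ k) {m : ℕ} (hm : 1 ≤ m) :
    G k m = m - (G k)^[k] (m-1) ∧ (G k)^[k] (m-1) ≤ m := by
  obtain ⟨kk, rfl⟩ : ∃ kk, k = kk + 1 := ⟨k - 1, by omega⟩
  have h1 : (G (kk+1))^[kk+1] (m-1) = (G (kk+1))^[kk] (G (kk+1) (m-1)) :=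
    Function.iterate_succ_apply _ _ _
  rw [h1, G_iterate (kk+1) hk kk _ (by omega)]
  have h2 := Cgt_eq_Ceq (kk+1) hk (G (kk+1) (m-1))
  simp only [Nat.add_sub_cancel] at h2
  rw [h2]
  have := key_count (kk+1) hm
  omega


lemma G_iter_le (i t : ℕ) : (G k)^[i] t ≤ t := by
  induction i with
  | zero => simp
  | succ i ih =>
      rw [Function.iterate_succ_apply']
      exact (G_le k _).trans ih

lemma G_iter_pos {j m : ℕ} (h : 1 ≤ m) : 1 ≤ (G k)^[j] m := by
  induction j with
  | zero => simpa
  | succ j ih =>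
      rw [Function.iterate_succ_apply' (G k) j m]
      exact one_le_G k ih

lemma F_eq_G (hk : 1 ≤ k) (F : ℕ → ℕ)
    (hF0 : F 0 = 0) (hF : ∀ n, 1 ≤ n → F n = n - F^[k] (n - 1)) :
    ∀ n, F n = G k n := by
  intro n
  induction n using Nat.strong_induction_on with
  | _ n ih =>
    rcases Nat.eq_zero_or_pos n with rfl | hn
    · rw [hF0, G_zero]
    · have hit : ∀ i, F^[i] (n-1) = (G k)^[i] (n-1) := by
        intro i
        induction i with
        | zero => rfl
        | succ i ih2 =>
            rw [Function.iterate_succ_apply' F i (n-1),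
              Function.iterate_succ_apply' (G k) i (n-1), ih2]
            exact ih _ (by have := G_iter_le k i (n-1); omega)
      rw [hF n hn, hit k, (G_rec k hk hn).1]

lemma interval (hk : 1 ≤ k) :
    ∀ j n, 1 ≤ n →
      {m : ℕ | (G k)^[j] m = n} = Set.Ioc ((Lk k)^[j] (n - 1)) ((Lk k)^[j] n) := by
  intro j
  induction j with
  | zero =>
      intro n hn
      ext m
      simp only [Function.iterate_zero, id_eq, Set.mem_setOf_eq, Set.mem_Ioc]
      omega
  | succ j ih =>
      intro n hn
      have e1 : ∀ t, (Lk k)^[j+1] t = Lk k ((Lk k)^[j] t) := fun t =>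
        Function.iterate_succ_apply' _ _ _
      ext m
      simp only [Set.mem_setOf_eq, Set.mem_Ioc]
      rw [e1 (n-1), e1 n, Function.iterate_succ_apply (G k) j m]
      have h1 : (G k)^[j] (G k m) = n ↔
          (Lk k)^[j] (n-1) < G k m ∧ G k m ≤ (Lk k)^[j] n := by
        have := Set.ext_iff.mp (ih n hn) (G k m)
        simpa [Set.mem_Ioc] using this
      rw [h1]
      constructor
      · rintro ⟨h2, h3⟩
        exact ⟨(Lk_lt_iff k).mpr h2, (G_le_iff k).mp h3⟩
      · rintro ⟨h2, h3⟩
        exact ⟨(Lk_lt_iff k).mp h2, (G_le_iff k).mpr h3⟩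
end Hof

/-- For n ≥ 1, the preimage of {n} under F_k^j is the integer interval
(L_k^j(n-1), L_k^j(n)]; equivalently, L_k^j(F_k^j(m)-1) < m ≤ L_k^j(F_k^j(m)) for all m ≥ 1. -/
theorem stmt3 (k j : ℕ) (hk : 1 ≤ k) (F : ℕ → ℕ)
    (hF0 : F 0 = 0) (hF : ∀ n, 1 ≤ n → F n = n - F^[k] (n - 1)) :
    (∀ n, 1 ≤ n → {m : ℕ | F^[j] m = n} = Set.Ioc ((Lk k)^[j] (n - 1)) ((Lk k)^[j] n)) ∧
    (∀ m, 1 ≤ m → (Lk k)^[j] (F^[j] m - 1) < m ∧ m ≤ (Lk k)^[j] (F^[j] m)) := by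
  have hFG : F = Hof.G k := funext (Hof.F_eq_G k hk F hF0 hF)
  subst hFG
  constructor
  · exact fun n hn => Hof.interval k hk j n hn
  · intro m hm
    have hn1 : 1 ≤ (Hof.G k)^[j] m := Hof.G_iter_pos k hm
    have h := Set.ext_iff.mp (Hof.interval k hk j ((Hof.G k)^[j] m) hn1) m
    rw [Set.mem_Ioc] at h
    exact h.mp rfl
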